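/- The prototile equations T₀ = τ⁻¹T₃; T₁ = (τ⁻¹T₂ + (1,0)) ∪ τ⁻¹T₃; T₂ = (τ⁻¹T₁ + (0,1)) ∪ τ⁻¹T₃; T₃ = (τ⁻¹T₀ + (1,1)) ∪ (τ⁻¹T₁ + (0,1)) ∪ (τ⁻¹T₂ + (1,0)) ∪ τ⁻¹T₃ are satisfied by the rectangles T₀ = [0,1]², T₁ = [0,τ]×[0,1], T₂ = [0,1]×[0,τ], T₃ = [0,τ]². -/
import Mathlib

noncomputable def tau : ℝ := (1 + Real.sqrt 5) / 2

/-- The affine map `x ↦ τ⁻¹ x + v` on `ℝ²`, applied to a set. -/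
noncomputable def tctr (v : ℝ × ℝ) (A : Set (ℝ × ℝ)) : Set (ℝ × ℝ) :=
  (fun x : ℝ × ℝ => tau⁻¹ • x + v) '' A

lemma sqrt5_sq : Real.sqrt 5 ^ 2 = 5 := Real.sq_sqrt (by norm_num)

lemma sqrt5_pos : (0:ℝ) < Real.sqrt 5 := Real.sqrt_pos.2 (by norm_num)

lemma tau_pos : (0:ℝ) < tau := by
  unfold tau; nlinarith [sqrt5_pos]

lemma tau_inv_pos : (0:ℝ) < tau⁻¹ := inv_pos.2 tau_pos

lemma tau_inv_mul_tau : tau⁻¹ * tau = 1 := inv_mul_cancel₀ tau_pos.ne'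

lemma tau_inv_eq : tau⁻¹ = tau - 1 := by
  have h := tau_pos
  field_simp
  unfold tau
  nlinarith [sqrt5_sq]

lemma tctr_prod (v : ℝ × ℝ) (a b c d : ℝ) :
    tctr v (Set.Icc a b ×ˢ Set.Icc c d) =
      Set.Icc (tau⁻¹ * a + v.1) (tau⁻¹ * b + v.1) ×ˢ
        Set.Icc (tau⁻¹ * c + v.2) (tau⁻¹ * d + v.2) := by
  rw [← Set.image_affine_Icc' tau_inv_pos v.1, ← Set.image_affine_Icc' tau_inv_pos v.2,
    Set.prod_image_image_eq, tctr]
  rfl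

theorem prototile_equations :
    let T0 : Set (ℝ × ℝ) := Set.Icc 0 1 ×ˢ Set.Icc 0 1
    let T1 : Set (ℝ × ℝ) := Set.Icc 0 tau ×ˢ Set.Icc 0 1
    let T2 : Set (ℝ × ℝ) := Set.Icc 0 1 ×ˢ Set.Icc 0 tau
    let T3 : Set (ℝ × ℝ) := Set.Icc 0 tau ×ˢ Set.Icc 0 tau
    T0 = tctr 0 T3 ∧
    T1 = tctr (1, 0) T2 ∪ tctr 0 T3 ∧
    T2 = tctr (0, 1) T1 ∪ tctr 0 T3 ∧
    T3 = tctr (1, 1) T0 ∪ tctr (0, 1) T1 ∪ tctr (1, 0) T2 ∪ tctr 0 T3 := by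
  intro T0 T1 T2 T3
  have h1 : tau⁻¹ * tau + (0:ℝ) = 1 := by rw [tau_inv_mul_tau]; ring
  have h2 : tau⁻¹ * 1 + (1:ℝ) = tau := by rw [tau_inv_eq]; ring
  have h0 : tau⁻¹ * 0 + (0:ℝ) = 0 := by ring
  have h0' : tau⁻¹ * 0 + (1:ℝ) = 1 := by ring
  have hle1 : (0:ℝ) ≤ 1 := by norm_num
  have hle2 : (1:ℝ) ≤ tau := by rw [← h2]; nlinarith [tau_inv_pos]
  have key0 : tctr 0 T3 = Set.Icc (0:ℝ) 1 ×ˢ Set.Icc (0:ℝ) 1 := by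
    show tctr (0,0) T3 = _
    rw [tctr_prod]; simp only [h1, h0]
  have key10 : tctr (1, 0) T2 = Set.Icc (1:ℝ) tau ×ˢ Set.Icc (0:ℝ) 1 := by
    rw [tctr_prod]; simp only [h1, h2, h0, h0']
  have key01 : tctr (0, 1) T1 = Set.Icc (0:ℝ) 1 ×ˢ Set.Icc (1:ℝ) tau := by
    rw [tctr_prod]; simp only [h1, h2, h0, h0']
  have key11 : tctr (1, 1) T0 = Set.Icc (1:ℝ) tau ×ˢ Set.Icc (1:ℝ) tau := by
    rw [tctr_prod]; simp only [h2, h0']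
  have hIcc : Set.Icc (0:ℝ) 1 ∪ Set.Icc 1 tau = Set.Icc 0 tau :=
    Set.Icc_union_Icc_eq_Icc hle1 hle2
  refine ⟨key0.symm, ?_, ?_, ?_⟩
  · rw [key10, key0, ← Set.union_prod, Set.union_comm, hIcc]
  · rw [key01, key0, ← Set.prod_union, Set.union_comm, hIcc]
  · show Set.Icc (0:ℝ) tau ×ˢ Set.Icc (0:ℝ) tau = _
    rw [key11, key01, key10, key0, ← hIcc, Set.prod_union, Set.union_prod, Set.union_prod]
    ext p; simp; tauto
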